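/- Let T : M_n(ℂ) → M_n(ℂ) be ℝ-linear with ρ(T(x)) = ρ(x) for all x. Then T is injective. -/

import Mathlib

noncomputable def specRad (n : ℕ) (x : Matrix (Fin n) (Fin n) ℂ) : ℝ :=
  sSup ((fun z : ℂ => ‖z‖) '' spectrum ℂ x)

open Matrix Polynomial

private lemma spec_subset_of_specRad_zero {n : ℕ} {m : Matrix (Fin n) (Fin n) ℂ}
    (h : specRad n m = 0) : spectrum ℂ m ⊆ {0} := by
  intro μ hμ
  have hb : BddAbove ((fun z : ℂ => ‖z‖) '' spectrum ℂ m) :=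
    ((Matrix.finite_spectrum m).image _).bddAbove
  have h1 : ‖μ‖ ≤ 0 := h ▸ le_csSup hb ⟨μ, hμ, rfl⟩
  have : ‖μ‖ = 0 := le_antisymm h1 (norm_nonneg μ)
  simpa using norm_eq_zero.mp this

private lemma isNilpotent_of_spec_subset {n : ℕ} {m : Matrix (Fin n) (Fin n) ℂ}
    (h : spectrum ℂ m ⊆ {0}) : IsNilpotent m := by
  set e := Matrix.toLinAlgEquiv' (R := ℂ) (n := Fin n)
  set φ := e m with hφ
  have hspec : spectrum ℂ φ = spectrum ℂ m := AlgEquiv.spectrum_eq e m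
  have hint : IsIntegral ℂ φ := Algebra.IsIntegral.isIntegral φ
  have hmon : (minpoly ℂ φ).Monic := minpoly.monic hint
  have hne : minpoly ℂ φ ≠ 0 := minpoly.ne_zero hint
  have hroots : ∀ r ∈ (minpoly ℂ φ).roots, r = 0 := by
    intro r hr
    have hr' : (minpoly ℂ φ).IsRoot r := isRoot_of_mem_roots hr
    have : Module.End.HasEigenvalue φ r := Module.End.hasEigenvalue_of_isRoot hr'
    have : r ∈ spectrum ℂ φ := this.mem_spectrum
    have := h (hspec ▸ this)
    simpa using this
  have hsplit : Splits (minpoly ℂ φ) := IsAlgClosed.splits _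
  have hprod := hsplit.eq_prod_roots_of_monic hmon
  have hmapeq : (minpoly ℂ φ).roots.map (fun a => X - C a)
      = (minpoly ℂ φ).roots.map (fun _ => (X : ℂ[X])) := by
    apply Multiset.map_congr rfl
    intro r hr
    rw [hroots r hr]; simp
  have hX : minpoly ℂ φ = X ^ Multiset.card (minpoly ℂ φ).roots := by
    conv_lhs => rw [hprod, hmapeq, Multiset.map_const', Multiset.prod_replicate]
  have hφnil : IsNilpotent φ := by
    refine ⟨Multiset.card (minpoly ℂ φ).roots, ?_⟩
    have := minpoly.aeval ℂ φ
    rw [hX, map_pow, aeval_X] at this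
    exact this
  have : IsNilpotent (e.symm φ) := hφnil.map e.symm
  simpa [hφ] using this

private lemma specRad_eq_zero_of_nilpotent {n : ℕ} {m : Matrix (Fin n) (Fin n) ℂ}
    (h : IsNilpotent m) : specRad n m = 0 := by
  have hsub : spectrum ℂ m ⊆ {0} := by
    intro μ hμ
    set e := Matrix.toLinAlgEquiv' (R := ℂ) (n := Fin n)
    have hspec : spectrum ℂ (e m) = spectrum ℂ m := AlgEquiv.spectrum_eq e m
    have hμ' : μ ∈ spectrum ℂ (e m) := hspec ▸ hμ
    have hev : Module.End.HasEigenvalue (e m) μ :=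
      Module.End.hasEigenvalue_iff_mem_spectrum.mpr hμ'
    obtain ⟨v, hv⟩ := hev.exists_hasEigenvector
    obtain ⟨k, hk⟩ := h.map e
    have h1 : ((e m) ^ k) v = μ ^ k • v := hv.pow_apply k
    rw [hk] at h1
    have h2 : μ ^ k • v = 0 := h1.symm
    rcases smul_eq_zero.mp h2 with h3 | h3
    · simpa using pow_eq_zero_iff'.mp h3 |>.1
    · exact absurd h3 hv.right
  have himg : (fun z : ℂ => ‖z‖) '' spectrum ℂ m ⊆ {0} := by
    rintro r ⟨μ, hμ, rfl⟩
    have := hsub hμ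
    simp_all
  rcases Set.subset_singleton_iff_eq.mp himg with h' | h'
  · rw [specRad, h', Real.sSup_empty]
  · rw [specRad, h', csSup_singleton]

private lemma trace_mul_stdBasisMatrix {n : ℕ} (M : Matrix (Fin n) (Fin n) ℂ) (i j : Fin n) :
    Matrix.trace (M * single j i 1) = M i j := by
  rw [Matrix.trace]
  rw [Finset.sum_eq_single i]
  · simp [Matrix.diag]
  · intro k _ hk
    simpa [Matrix.diag] using Matrix.mul_single_apply_of_ne 1 j i k k hk M
  · simp

private lemma trace_eq_zero_of_nilpotent {n : ℕ} {m : Matrix (Fin n) (Fin n) ℂ}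
    (h : IsNilpotent m) : Matrix.trace m = 0 :=
  (Matrix.isNilpotent_trace_of_isNilpotent h).eq_zero

private lemma eq_zero_of_forall_specRad {n : ℕ} {x : Matrix (Fin n) (Fin n) ℂ}
    (h : ∀ z, specRad n (x + z) = specRad n z) : x = 0 := by
  have hnil : ∀ z : Matrix (Fin n) (Fin n) ℂ, IsNilpotent z → IsNilpotent (x + z) := by
    intro z hz
    exact isNilpotent_of_spec_subset <| spec_subset_of_specRad_zero <|
      (h z).trans (specRad_eq_zero_of_nilpotent hz)
  have hx : IsNilpotent x := by simpa using hnil 0 (IsNilpotent.zero)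
  have hoff : ∀ i j : Fin n, i ≠ j → x i j = 0 := by
    intro i j hij
    set E : Matrix (Fin n) (Fin n) ℂ := single j i 1 with hE
    have hE2 : E * E = 0 := by
      rw [hE]; exact Matrix.single_mul_single_of_ne 1 j i j hij 1
    have hEnil : IsNilpotent E := ⟨2, by rw [sq]; exact hE2⟩
    have hxE : IsNilpotent (x + E) := hnil E hEnil
    have htr1 : Matrix.trace ((x + E) * (x + E)) = 0 := by
      have : IsNilpotent ((x + E) * (x + E)) := by
        obtain ⟨k, hk⟩ := hxE
        exact ⟨k, by rw [← pow_two, ← pow_mul, mul_comm, pow_mul, hk]; simp⟩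
      exact trace_eq_zero_of_nilpotent this
    have htr2 : Matrix.trace (x * x) = 0 := by
      have : IsNilpotent (x * x) := by
        obtain ⟨k, hk⟩ := hx
        exact ⟨k, by rw [← pow_two, ← pow_mul, mul_comm, pow_mul, hk]; simp⟩
      exact trace_eq_zero_of_nilpotent this
    have hexp : (x + E) * (x + E) = x * x + x * E + E * x + E * E := by
      noncomm_ring
    rw [hexp, Matrix.trace_add, Matrix.trace_add, Matrix.trace_add, htr2, hE2,
      Matrix.trace_mul_comm E x, trace_mul_stdBasisMatrix, Matrix.trace_zero] at htr1
    have : (2 : ℂ) * x i j = 0 := by linear_combination htr1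
    simpa using this
  have hdiag : x = Matrix.diagonal (fun k => x k k) := by
    ext a b
    by_cases hab : a = b
    · subst hab; simp
    · rw [Matrix.diagonal_apply_ne _ hab]; exact hoff a b hab
  obtain ⟨k, hk⟩ := hx
  have hk' : x ^ (k + 1) = 0 := by
    rw [pow_succ, hk, Matrix.zero_mul]
  ext a b
  by_cases hab : a = b
  · subst hab
    have : (x ^ (k + 1)) a a = 0 := by rw [hk']; rfl
    rw [hdiag, Matrix.diagonal_pow, Matrix.diagonal_apply_eq] at this
    have := pow_eq_zero_iff (Nat.succ_ne_zero k) |>.mp this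
    simpa using this
  · simp [hoff a b hab]

theorem stmt_7 (n : ℕ) (T : Matrix (Fin n) (Fin n) ℂ → Matrix (Fin n) (Fin n) ℂ)
    (hT : IsLinearMap ℝ T)
    (hρ : ∀ x, specRad n (T x) = specRad n x) :
    Function.Injective T := by
  intro a b hab
  have hx : T (a - b) = 0 := by
    rw [hT.map_sub, hab, sub_self]
  have hkey : ∀ z, specRad n ((a - b) + z) = specRad n z := by
    intro z
    calc specRad n ((a - b) + z) = specRad n (T ((a - b) + z)) := (hρ _).symm
      _ = specRad n (T z) := by rw [hT.map_add, hx, zero_add]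
      _ = specRad n z := hρ z
  have := eq_zero_of_forall_specRad hkey
  exact sub_eq_zero.mp this
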